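/- In the cubical chain complex of a cubical set, the Serre diagonal Δ_□(u) = Σ_{A|B} sgn(A;B) · d^0_B(u) ⊗ d^1_A(u), summed over all complementary pairs (A,B) of subsets of {1,...,m} (including A or B empty), is coassociative: (Δ_□ ⊗ 1) ∘ Δ_□ = (1 ⊗ Δ_□) ∘ Δ_□. -/

import Mathlib

/-!
STATEMENT 7.  In the cubical chain complex of a cubical set, the Serre
diagonal
`Δ_□(u) = Σ_{A|B} sgn(A;B) · d^0_B(u) ⊗ d^1_A(u)`,
summed over all complementary pairs `(A,B)` of subsets of `{1,…,m}`
(including `A` or `B` empty), is coassociative: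
`(Δ_□ ⊗ 1) ∘ Δ_□ = (1 ⊗ Δ_□) ∘ Δ_□`.

A cubical set is abstracted by its set of cells, a dimension function, and
face operators `face ε i` (`ε = false` for `d^0_i`, `ε = true` for `d^1_i`)
subject to the cubical identities.  `C_*(X)` is the free module on the cells,
and `Δ_□` is extended linearly. -/

/-- The cells, dimensions and face operators of a cubical set. -/
structure CubicalData where
  Cell : Type
  dim : Cell → ℕ
  face : Bool → ℕ → Cell → Cell

/-- Iterated face operator `d^ε_S`: for `S = {j_1 < ⋯ < j_q}` this is
`d^ε_{j_1} ∘ ⋯ ∘ d^ε_{j_q}`. -/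
def iterFace (X : CubicalData) (ε : Bool) (S : Finset ℕ) (c : X.Cell) : X.Cell :=
  (S.sort (· ≤ ·)).foldr (X.face ε) c

/-- The shuffle sign `sgn(A;B)`: `(−1)` to the number of inversions between
`A` and `B`. -/
def shuffleSign (A B : Finset ℕ) : ℤ :=
  (-1) ^ ((A ×ˢ B).filter fun p => p.2 < p.1).card

/-- The Serre (cubical) diagonal on the chain complex of a cubical set. -/
noncomputable def serreDiagonal (R : Type*) [CommRing R] (X : CubicalData) :
    (X.Cell →₀ R) →ₗ[R] TensorProduct R (X.Cell →₀ R) (X.Cell →₀ R) :=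
  Finsupp.lift _ R _ fun u =>
    ∑ A ∈ (Finset.Icc 1 (X.dim u)).powerset,
      ((shuffleSign A ((Finset.Icc 1 (X.dim u)) \ A) : ℤ) : R) •
        (Finsupp.single (iterFace X false ((Finset.Icc 1 (X.dim u)) \ A) u) (1 : R) ⊗ₜ[R]
          Finsupp.single (iterFace X true A u) (1 : R))


namespace Stmt7


/-- pushed index: the raw coordinate corresponding to renumbered index `i`
after removing the (sorted) coordinates in `l`. -/
def pushIdx : List ℕ → ℕ → ℕ
  | [], i => i
  | t :: ts, i => if t ≤ i then pushIdx ts (i+1) else i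

/-- sorted insertion of the pushed index. -/
def insertPush : List ℕ → ℕ → List ℕ
  | [], i => [i]
  | t :: ts, i => if t ≤ i then t :: insertPush ts (i+1) else i :: t :: ts

lemma le_pushIdx : ∀ (l : List ℕ) (i : ℕ), i ≤ pushIdx l i
  | [], i => le_rfl
  | t :: ts, i => by
      rw [pushIdx]
      split
      · exact (Nat.le_succ i).trans (le_pushIdx ts (i+1))
      · exact le_rfl

lemma pushIdx_le : ∀ (l : List ℕ) (i : ℕ), pushIdx l i ≤ i + l.length
  | [], i => le_rfl
  | t :: ts, i => by
      rw [pushIdx]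
      split
      · have := pushIdx_le ts (i+1); simp only [List.length_cons]; omega
      · exact Nat.le_add_right _ _

lemma pushIdx_strictMono : ∀ (l : List ℕ) {i j : ℕ}, i < j → pushIdx l i < pushIdx l j
  | [], i, j, h => h
  | t :: ts, i, j, h => by
      rw [pushIdx, pushIdx]
      rcases le_or_gt t i with hti | hti
      · rw [if_pos hti, if_pos (hti.trans h.le)]
        exact pushIdx_strictMono ts (by omega)
      · rw [if_neg (by omega)]
        split
        · exact lt_of_lt_of_le (by omega) (le_pushIdx ts (j+1))
        · exact h

lemma pushIdx_not_mem : ∀ (l : List ℕ), l.Pairwise (· < ·) → ∀ i, pushIdx l i ∉ l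
  | [], _, i => List.not_mem_nil
  | t :: ts, h, i => by
      rw [pushIdx]
      rcases List.pairwise_cons.mp h with ⟨ht, hts⟩
      split
      · intro hm
        rcases List.mem_cons.mp hm with h1 | h2
        · have := le_pushIdx ts (i+1); omega
        · exact pushIdx_not_mem ts hts (i+1) h2
      · intro hm
        rcases List.mem_cons.mp hm with h1 | h2
        · omega
        · have := ht _ h2; omega

lemma insertPush_perm : ∀ (l : List ℕ) (i : ℕ), (insertPush l i).Perm (pushIdx l i :: l)
  | [], i => List.Perm.refl _
  | t :: ts, i => by
      rw [insertPush, pushIdx]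
      split
      · exact ((insertPush_perm ts (i+1)).cons t).trans (List.Perm.swap _ _ _)
      · exact List.Perm.refl _

lemma insertPush_sorted : ∀ (l : List ℕ), l.Pairwise (· < ·) → ∀ i, (insertPush l i).Pairwise (· < ·)
  | [], _, i => List.pairwise_singleton _ _
  | t :: ts, h, i => by
      rcases List.pairwise_cons.mp h with ⟨ht, hts⟩
      rw [insertPush]
      split
      · refine List.pairwise_cons.mpr ⟨?_, insertPush_sorted ts hts (i+1)⟩
        intro b hb
        have := (insertPush_perm ts (i+1)).mem_iff.mp hb
        rcases List.mem_cons.mp this with h1 | h2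
        · have := le_pushIdx ts (i+1); omega
        · exact ht _ h2
      · refine List.pairwise_cons.mpr ⟨?_, h⟩
        intro b hb
        rcases List.mem_cons.mp hb with h1 | h2
        · omega
        · have := ht _ h2; omega

lemma pushIdx_insertPush : ∀ (l : List ℕ) {a b : ℕ}, a < b →
    pushIdx (insertPush l b) a = pushIdx l a
  | [], a, b, h => by
      rw [insertPush, pushIdx, pushIdx, if_neg (by omega)]
  | t :: ts, a, b, h => by
      rw [insertPush]
      split
      · rw [pushIdx, pushIdx]
        split
        · exact pushIdx_insertPush ts (by omega)
        · rfl
      · rw [pushIdx, if_neg (by omega), pushIdx, if_neg (by omega)]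



/-- Iterated mixed face along a list. -/
def mFaceL (X : CubicalData) (F : ℕ → Bool) (l : List ℕ) (c : X.Cell) : X.Cell :=
  l.foldr (fun i => X.face (F i) i) c

variable {X : CubicalData}
variable (hface : ∀ (ε ω : Bool) (i j : ℕ) (c : X.Cell), i < j →
      X.face ε i (X.face ω j c) = X.face ω (j - 1) (X.face ε i c))

lemma mFaceL_congr {F G : ℕ → Bool} : ∀ (l : List ℕ), (∀ i ∈ l, F i = G i) →
    ∀ c : X.Cell, mFaceL X F l c = mFaceL X G l c
  | [], _, c => rfl
  | t :: ts, h, c => by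
      have hrec : mFaceL X F ts c = mFaceL X G ts c :=
        mFaceL_congr ts (fun i hi => h i (List.mem_cons_of_mem _ hi)) c
      show X.face (F t) t (mFaceL X F ts c) = X.face (G t) t (mFaceL X G ts c)
      rw [h t (List.mem_cons_self), hrec]

include hface in
lemma face_mFaceL (F : ℕ → Bool) : ∀ (l : List ℕ) (i : ℕ) (c : X.Cell),
    X.face (F (pushIdx l i)) i (mFaceL X F l c) = mFaceL X F (insertPush l i) c
  | [], i, c => rfl
  | t :: ts, i, c => by
      rw [pushIdx, insertPush]
      split
      · have hc := hface (F t) (F (pushIdx ts (i+1))) t (i+1) (mFaceL X F ts c) (by omega)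
        simp only [Nat.add_sub_cancel] at hc
        show X.face (F (pushIdx ts (i+1))) i (X.face (F t) t (mFaceL X F ts c))
            = X.face (F t) t (mFaceL X F (insertPush ts (i+1)) c)
        rw [← hc]
        exact congrArg _ (face_mFaceL F ts (i+1) c)
      · rfl

/-- push a whole (descending-applied) list of renumbered indices into `l`. -/
def pushAll (l : List ℕ) : List ℕ → List ℕ
  | [] => l
  | s :: ss => insertPush (pushAll l ss) s

lemma pushIdx_pushAll (l : List ℕ) : ∀ (ss : List ℕ) {a : ℕ}, (∀ b ∈ ss, a < b) →
    pushIdx (pushAll l ss) a = pushIdx l a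
  | [], a, _ => rfl
  | s :: ss, a, h => by
      rw [pushAll, pushIdx_insertPush _ (h s (List.mem_cons_self))]
      exact pushIdx_pushAll l ss fun b hb => h b (List.mem_cons_of_mem _ hb)

include hface in
lemma mFaceL_mFaceL (F : ℕ → Bool) (l : List ℕ) : ∀ (s : List ℕ), s.Pairwise (· < ·) →
    ∀ c : X.Cell,
    mFaceL X (fun i => F (pushIdx l i)) s (mFaceL X F l c) = mFaceL X F (pushAll l s) c
  | [], _, c => rfl
  | a :: as, hs, c => by
      rcases List.pairwise_cons.mp hs with ⟨ha, has⟩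
      have step : mFaceL X (fun i => F (pushIdx l i)) (a :: as) (mFaceL X F l c)
          = X.face (F (pushIdx l a)) a (mFaceL X F (pushAll l as) c) := by
        simp only [mFaceL, List.foldr_cons]
        exact congrArg _ (mFaceL_mFaceL F l as has c)
      rw [step, ← pushIdx_pushAll l as ha, face_mFaceL hface, pushAll]

lemma pushAll_perm (l : List ℕ) : ∀ (s : List ℕ), s.Pairwise (· < ·) →
    (pushAll l s).Perm (s.map (pushIdx l) ++ l)
  | [], _ => List.Perm.refl _
  | a :: as, hs => by
      rcases List.pairwise_cons.mp hs with ⟨ha, has⟩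
      rw [pushAll, List.map_cons, List.cons_append]
      refine (insertPush_perm _ _).trans ?_
      rw [pushIdx_pushAll l as ha]
      exact ((pushAll_perm l as has).cons _)

lemma pushAll_sorted (l : List ℕ) (hl : l.Pairwise (· < ·)) : ∀ (s : List ℕ),
    (pushAll l s).Pairwise (· < ·)
  | [] => hl
  | a :: as => insertPush_sorted _ (pushAll_sorted l hl as) a

variable (hdim : ∀ (ε : Bool) (i : ℕ) (c : X.Cell), 1 ≤ i → i ≤ X.dim c →
      X.dim (X.face ε i c) = X.dim c - 1)

include hdim in
lemma dim_mFaceL (F : ℕ → Bool) : ∀ (l : List ℕ), l.Pairwise (· < ·) →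
    ∀ c : X.Cell, (∀ t ∈ l, 1 ≤ t ∧ t ≤ X.dim c) →
    X.dim (mFaceL X F l c) = X.dim c - l.length
  | [], _, c, _ => rfl
  | t :: ts, h, c, hmem => by
      rcases List.pairwise_cons.mp h with ⟨ht, hts⟩
      have hlen : ts.length + t ≤ X.dim c := by
        have hnd : ts.Nodup := hts.nodup
        have hsub : ts.toFinset ⊆ Finset.Icc (t+1) (X.dim c) := by
          intro x hx
          rw [List.mem_toFinset] at hx
          have h1 := ht x hx
          have h2 := (hmem x (List.mem_cons_of_mem _ hx)).2
          exact Finset.mem_Icc.mpr ⟨by omega, h2⟩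
        have := Finset.card_le_card hsub
        rw [List.toFinset_card_of_nodup hnd, Nat.card_Icc] at this
        have h3 := (hmem t (List.mem_cons_self)).2
        omega
      have hrec := dim_mFaceL F ts hts c fun x hx => hmem x (List.mem_cons_of_mem _ hx)
      simp only [mFaceL, List.foldr_cons] at *
      rw [hdim _ t _ (hmem t (List.mem_cons_self)).1 (by omega), hrec]
      simp only [List.length_cons]; omega



/-! ### Finset layer -/

/-- the order embedding of renumbered coordinates into the complement of `B`. -/
def sigmaEmb (B : Finset ℕ) (i : ℕ) : ℕ := pushIdx (B.sort (· ≤ ·)) i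

/-- mixed-sign iterated face over a finset. -/
def mFace (X : CubicalData) (F : ℕ → Bool) (S : Finset ℕ) (c : X.Cell) : X.Cell :=
  mFaceL X F (S.sort (· ≤ ·)) c

lemma iterFace_eq_mFace (ε : Bool) (S : Finset ℕ) (c : X.Cell) :
    iterFace X ε S c = mFace X (fun _ => ε) S c := rfl

lemma sigmaEmb_strictMono (B : Finset ℕ) : StrictMono (sigmaEmb B) :=
  fun _ _ h => pushIdx_strictMono _ h

lemma sigmaEmb_image {m : ℕ} {B : Finset ℕ} (hB : B ⊆ Finset.Icc 1 m) :
    (Finset.Icc 1 (m - B.card)).image (sigmaEmb B) = Finset.Icc 1 m \ B := by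
  have hcard : B.card ≤ m := by
    have := Finset.card_le_card hB
    simpa using this
  apply Finset.eq_of_subset_of_card_le
  · intro j hj
    rcases Finset.mem_image.mp hj with ⟨i, hi, rfl⟩
    rcases Finset.mem_Icc.mp hi with ⟨hi1, hi2⟩
    refine Finset.mem_sdiff.mpr ⟨Finset.mem_Icc.mpr ⟨?_, ?_⟩, ?_⟩
    · exact hi1.trans (le_pushIdx _ _)
    · show sigmaEmb B i ≤ m
      have := pushIdx_le (B.sort (· ≤ ·)) i
      rw [Finset.length_sort] at this
      unfold sigmaEmb
      omega
    · intro hmem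
      exact pushIdx_not_mem _ ((Finset.sortedLT_sort B).pairwise) i ((Finset.mem_sort _).mpr hmem)
  · rw [Finset.card_sdiff_of_subset hB, Finset.card_image_of_injective _ (sigmaEmb_strictMono B).injective]
    simp [Nat.card_Icc]

instance : IsAntisymm ℕ (· < ·) := ⟨fun a b h1 h2 => absurd h1 (not_lt.mpr h2.le)⟩

include hface in
/-- The key composition law. -/
lemma iterFace_iterFace (F : ℕ → Bool) (ε ω : Bool) (B S : Finset ℕ)
    (hFB : ∀ b ∈ B, F b = ω) (hFS : ∀ i ∈ S, F (sigmaEmb B i) = ε) (c : X.Cell) :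
    iterFace X ε S (iterFace X ω B c) = mFace X F (S.image (sigmaEmb B) ∪ B) c := by
  set l := B.sort (· ≤ ·) with hl
  set s := S.sort (· ≤ ·) with hs
  have hls : l.Pairwise (· < ·) := (Finset.sortedLT_sort B).pairwise
  have hss : s.Pairwise (· < ·) := (Finset.sortedLT_sort S).pairwise
  have e1 : iterFace X ω B c = mFaceL X F l c :=
    mFaceL_congr l (fun i hi => (hFB i ((Finset.mem_sort _).mp hi)).symm) c
  have e2 : iterFace X ε S (iterFace X ω B c)
      = mFaceL X (fun i => F (pushIdx l i)) s (mFaceL X F l c) := by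
    rw [e1]
    exact mFaceL_congr s (fun i hi => (hFS i ((Finset.mem_sort _).mp hi)).symm) _
  rw [e2, mFaceL_mFaceL hface F l s hss c]
  -- now identify the lists
  have hperm : (pushAll l s).Perm ((S.image (sigmaEmb B) ∪ B).sort (· ≤ ·)) := by
    apply List.perm_of_nodup_nodup_toFinset_eq (pushAll_sorted l hls s).nodup
      ((Finset.sortedLT_sort _).pairwise).nodup
    have h1 : (pushAll l s).toFinset = (s.map (pushIdx l)).toFinset ∪ l.toFinset := by
      rw [← List.toFinset_append]
      exact List.toFinset_eq_of_perm _ _ (pushAll_perm l s hss)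
    have h2 : (s.map (pushIdx l)).toFinset = S.image (sigmaEmb B) := by
      ext x
      simp only [List.mem_toFinset, List.mem_map, Finset.mem_image, hs, Finset.mem_sort]
      rfl
    rw [h1, Finset.sort_toFinset, Finset.sort_toFinset, h2]
  have heq : pushAll l s = (S.image (sigmaEmb B) ∪ B).sort (· ≤ ·) :=
    List.Perm.eq_of_pairwise' (pushAll_sorted l hls s) ((Finset.sortedLT_sort _).pairwise) hperm
  rw [heq]; rfl

include hdim in
lemma dim_iterFace {m : ℕ} (ε : Bool) (B : Finset ℕ) (c : X.Cell) (hm : X.dim c = m)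
    (hB : B ⊆ Finset.Icc 1 m) : X.dim (iterFace X ε B c) = m - B.card := by
  have := dim_mFaceL hdim (fun _ => ε) (B.sort (· ≤ ·)) ((Finset.sortedLT_sort B).pairwise) c ?_
  · rw [iterFace_eq_mFace, mFace, this, Finset.length_sort, hm]
  · intro t ht
    have := hB ((Finset.mem_sort _).mp ht)
    rw [hm]
    exact Finset.mem_Icc.mp this

/-! ### sign lemmas -/

lemma shuffleSign_image {f : ℕ → ℕ} (hf : StrictMono f) (A B : Finset ℕ) :
    shuffleSign (A.image f) (B.image f) = shuffleSign A B := by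
  unfold shuffleSign
  congr 1
  symm
  apply Finset.card_bij (fun p _ => ((f p.1, f p.2) : ℕ × ℕ))
  · rintro ⟨a, b⟩ hp
    rw [Finset.mem_filter, Finset.mem_product] at hp ⊢
    exact ⟨⟨Finset.mem_image_of_mem f hp.1.1, Finset.mem_image_of_mem f hp.1.2⟩,
      hf hp.2⟩
  · rintro ⟨a, b⟩ hp ⟨a', b'⟩ hp' h
    simp only [Prod.mk.injEq] at h
    exact Prod.ext (hf.injective h.1) (hf.injective h.2)
  · rintro ⟨x, y⟩ hq
    rw [Finset.mem_filter, Finset.mem_product] at hq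
    rcases Finset.mem_image.mp hq.1.1 with ⟨a, ha, rfl⟩
    rcases Finset.mem_image.mp hq.1.2 with ⟨b, hb, rfl⟩
    exact ⟨(a, b), Finset.mem_filter.mpr ⟨Finset.mem_product.mpr ⟨ha, hb⟩, hf.lt_iff_lt.mp hq.2⟩, rfl⟩

lemma shuffleSign_union_left {P Q : Finset ℕ} (h : Disjoint P Q) (R : Finset ℕ) :
    shuffleSign (P ∪ Q) R = shuffleSign P R * shuffleSign Q R := by
  unfold shuffleSign
  rw [← pow_add]
  congr 1
  rw [Finset.union_product, Finset.filter_union]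
  apply Finset.card_union_of_disjoint
  refine Finset.disjoint_left.mpr ?_
  rintro ⟨a, b⟩ hp hq
  rw [Finset.mem_filter, Finset.mem_product] at hp hq
  exact (Finset.disjoint_left.mp h) hp.1.1 hq.1.1

lemma shuffleSign_union_right {Q R : Finset ℕ} (P : Finset ℕ) (h : Disjoint Q R) :
    shuffleSign P (Q ∪ R) = shuffleSign P Q * shuffleSign P R := by
  unfold shuffleSign
  rw [← pow_add]
  congr 1
  rw [Finset.product_union, Finset.filter_union]
  apply Finset.card_union_of_disjoint
  refine Finset.disjoint_left.mpr ?_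
  rintro ⟨a, b⟩ hp hq
  rw [Finset.mem_filter, Finset.mem_product] at hp hq
  exact (Finset.disjoint_left.mp h) hp.1.2 hq.1.2



/-! ### linear algebra layer -/

variable (R : Type*) [CommRing R]

lemma serre_single (v : X.Cell) :
    serreDiagonal R X (Finsupp.single v 1) =
      ∑ A ∈ (Finset.Icc 1 (X.dim v)).powerset,
        ((shuffleSign A ((Finset.Icc 1 (X.dim v)) \ A) : ℤ) : R) •
          (Finsupp.single (iterFace X false ((Finset.Icc 1 (X.dim v)) \ A) v) (1 : R) ⊗ₜ[R]
            Finsupp.single (iterFace X true A v) (1 : R)) := by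
  rw [serreDiagonal, Finsupp.lift_apply, Finsupp.sum_single_index, one_smul]
  rw [zero_smul]



include hdim in
lemma LHS_eval (u : X.Cell) :
    (TensorProduct.assoc R (X.Cell →₀ R) (X.Cell →₀ R) (X.Cell →₀ R)).toLinearMap
        (LinearMap.rTensor (X.Cell →₀ R) (serreDiagonal R X)
          (serreDiagonal R X (Finsupp.single u 1)))
      = ∑ A ∈ (Finset.Icc 1 (X.dim u)).powerset,
          ∑ C ∈ (Finset.Icc 1 A.card).powerset,
            ((shuffleSign A (Finset.Icc 1 (X.dim u) \ A)
                * shuffleSign C (Finset.Icc 1 A.card \ C) : ℤ) : R) •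
              (Finsupp.single (iterFace X false (Finset.Icc 1 A.card \ C)
                  (iterFace X false (Finset.Icc 1 (X.dim u) \ A) u)) (1:R) ⊗ₜ[R]
                (Finsupp.single (iterFace X true C
                    (iterFace X false (Finset.Icc 1 (X.dim u) \ A) u)) (1:R) ⊗ₜ[R]
                  Finsupp.single (iterFace X true A u) (1:R))) := by
  rw [serre_single, map_sum, map_sum]
  refine Finset.sum_congr rfl fun A hA => ?_
  rw [map_smul, map_smul, LinearMap.rTensor_tmul]
  have hdimA : X.dim (iterFace X false (Finset.Icc 1 (X.dim u) \ A) u) = A.card := by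
    have hAsub := Finset.mem_powerset.mp hA
    have hsub : Finset.Icc 1 (X.dim u) \ A ⊆ Finset.Icc 1 (X.dim u) := Finset.sdiff_subset
    rw [dim_iterFace hdim false _ u rfl hsub, Finset.card_sdiff_of_subset hAsub]
    have h1 := Finset.card_le_card hAsub
    rw [Nat.card_Icc] at h1 ⊢
    omega
  rw [serre_single, hdimA, TensorProduct.sum_tmul, map_sum, Finset.smul_sum]
  refine Finset.sum_congr rfl fun C hC => ?_
  rw [← TensorProduct.smul_tmul', LinearMapClass.map_smul]
  simp only [LinearEquiv.coe_coe, TensorProduct.assoc_tmul, smul_smul, ← Int.cast_mul]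

include hdim in
lemma RHS_eval (u : X.Cell) :
    LinearMap.lTensor (X.Cell →₀ R) (serreDiagonal R X)
          (serreDiagonal R X (Finsupp.single u 1))
      = ∑ P ∈ (Finset.Icc 1 (X.dim u)).powerset,
          ∑ D ∈ (Finset.Icc 1 (X.dim u - P.card)).powerset,
            ((shuffleSign P (Finset.Icc 1 (X.dim u) \ P)
                * shuffleSign D (Finset.Icc 1 (X.dim u - P.card) \ D) : ℤ) : R) •
              (Finsupp.single (iterFace X false (Finset.Icc 1 (X.dim u) \ P) u) (1:R) ⊗ₜ[R]
                (Finsupp.single (iterFace X false (Finset.Icc 1 (X.dim u - P.card) \ D)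
                    (iterFace X true P u)) (1:R) ⊗ₜ[R]
                  Finsupp.single (iterFace X true D (iterFace X true P u)) (1:R))) := by
  rw [serre_single, map_sum]
  refine Finset.sum_congr rfl fun P hP => ?_
  rw [map_smul, LinearMap.lTensor_tmul]
  have hdimP : X.dim (iterFace X true P u) = X.dim u - P.card :=
    dim_iterFace hdim true P u rfl (Finset.mem_powerset.mp hP)
  rw [serre_single, hdimP, TensorProduct.tmul_sum, Finset.smul_sum]
  refine Finset.sum_congr rfl fun D hD => ?_
  rw [TensorProduct.tmul_smul, smul_smul, ← Int.cast_mul]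



/-- the canonical triple term attached to a partition `I = P ⊔ Q ⊔ R`. -/
noncomputable def G (u : X.Cell) (P Q : Finset ℕ) :
    TensorProduct R (X.Cell →₀ R) (TensorProduct R (X.Cell →₀ R) (X.Cell →₀ R)) :=
  ((shuffleSign P Q * shuffleSign P (Finset.Icc 1 (X.dim u) \ (P ∪ Q))
      * shuffleSign Q (Finset.Icc 1 (X.dim u) \ (P ∪ Q)) : ℤ) : R) •
    (Finsupp.single (iterFace X false (Finset.Icc 1 (X.dim u) \ P) u) (1:R) ⊗ₜ[R]
      (Finsupp.single (mFace X (fun j => decide (j ∈ P))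
          (P ∪ (Finset.Icc 1 (X.dim u) \ (P ∪ Q))) u) (1:R) ⊗ₜ[R]
        Finsupp.single (iterFace X true (P ∪ Q) u) (1:R)))

include hface in
lemma Lterm (u : X.Cell) {A C : Finset ℕ} (hA : A ⊆ Finset.Icc 1 (X.dim u))
    (hC : C ⊆ Finset.Icc 1 A.card) :
    ((shuffleSign A (Finset.Icc 1 (X.dim u) \ A)
        * shuffleSign C (Finset.Icc 1 A.card \ C) : ℤ) : R) •
      (Finsupp.single (iterFace X false (Finset.Icc 1 A.card \ C)
          (iterFace X false (Finset.Icc 1 (X.dim u) \ A) u)) (1:R) ⊗ₜ[R]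
        (Finsupp.single (iterFace X true C
            (iterFace X false (Finset.Icc 1 (X.dim u) \ A) u)) (1:R) ⊗ₜ[R]
          Finsupp.single (iterFace X true A u) (1:R)))
    = G R u (C.image (sigmaEmb (Finset.Icc 1 (X.dim u) \ A)))
        (A \ C.image (sigmaEmb (Finset.Icc 1 (X.dim u) \ A))) := by
  set m := X.dim u with hm
  set I : Finset ℕ := Finset.Icc 1 m with hI
  set B : Finset ℕ := I \ A with hB
  set σ : ℕ → ℕ := sigmaEmb B with hσ
  set P : Finset ℕ := C.image σ with hPdef
  set Q : Finset ℕ := A \ P with hQdef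
  have hBI : B ⊆ I := Finset.sdiff_subset
  have hcard : m - B.card = A.card := by
    have h1 := Finset.card_le_card hA
    have h2 : B.card = I.card - A.card := by rw [hB, Finset.card_sdiff_of_subset hA]
    have h3 : I.card = m := by rw [hI, Nat.card_Icc]; omega
    omega
  have himg : (Finset.Icc 1 A.card).image σ = A := by
    rw [hσ, ← hcard, sigmaEmb_image hBI, hB, Finset.sdiff_sdiff_eq_self hA]
  have hinj : Function.Injective σ := (sigmaEmb_strictMono B).injective
  have hP : P ⊆ A := by
    rw [hPdef, ← himg]
    exact Finset.image_subset_image hC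
  have hPQ : P ∪ Q = A := by rw [hQdef, Finset.union_sdiff_of_subset hP]
  have hIPQ : I \ (P ∪ Q) = B := by rw [hPQ]
  have himgC : (Finset.Icc 1 A.card \ C).image σ = A \ P := by
    rw [Finset.image_sdiff _ _ hinj, himg, hPdef]
  -- cell 1
  have hc1 : iterFace X false (Finset.Icc 1 A.card \ C) (iterFace X false B u)
      = iterFace X false (I \ P) u := by
    rw [iterFace_iterFace hface (fun _ => false) false false B _ (fun _ _ => rfl)
      (fun _ _ => rfl), himgC]
    have hset : (A \ P) ∪ B = I \ P := by
      ext a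
      simp only [Finset.mem_union, Finset.mem_sdiff, hB]
      constructor
      · rintro (⟨h1, h2⟩ | ⟨h1, h2⟩)
        · exact ⟨hA h1, h2⟩
        · exact ⟨h1, fun hp => h2 (hP hp)⟩
      · rintro ⟨h1, h2⟩
        by_cases ha : a ∈ A
        · exact Or.inl ⟨ha, h2⟩
        · exact Or.inr ⟨h1, ha⟩
    rw [hset, ← iterFace_eq_mFace]
  -- cell 2
  have hc2 : iterFace X true C (iterFace X false B u)
      = mFace X (fun j => decide (j ∈ P)) (P ∪ (I \ (P ∪ Q))) u := by
    rw [iterFace_iterFace hface (fun j => decide (j ∈ P)) true false B C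
      (fun b hb => decide_eq_false (fun hp => (Finset.mem_sdiff.mp (hB ▸ hb)).2 (hP hp)))
      (fun i hi => decide_eq_true (hPdef ▸ Finset.mem_image_of_mem σ hi)), hIPQ, ← hPdef]
  -- sign
  have hsgn : shuffleSign A (I \ A) * shuffleSign C (Finset.Icc 1 A.card \ C)
      = shuffleSign P Q * shuffleSign P (I \ (P ∪ Q)) * shuffleSign Q (I \ (P ∪ Q)) := by
    have h1 : shuffleSign C (Finset.Icc 1 A.card \ C) = shuffleSign P Q := by
      rw [hPdef, hQdef, hPdef, ← himgC, hσ, shuffleSign_image (sigmaEmb_strictMono B)]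
    have h2 : shuffleSign A (I \ A) = shuffleSign P (I \ A) * shuffleSign Q (I \ A) := by
      rw [← hPQ, shuffleSign_union_left Finset.disjoint_sdiff]
    rw [h1, h2, hIPQ, hB]
    ring
  rw [G, hc1, hc2, ← hsgn, ← hPQ]
  rw [hPQ]



include hface in
lemma Rterm (u : X.Cell) {P D : Finset ℕ} (hP : P ⊆ Finset.Icc 1 (X.dim u))
    (hD : D ⊆ Finset.Icc 1 (X.dim u - P.card)) :
    ((shuffleSign P (Finset.Icc 1 (X.dim u) \ P)
        * shuffleSign D (Finset.Icc 1 (X.dim u - P.card) \ D) : ℤ) : R) •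
      (Finsupp.single (iterFace X false (Finset.Icc 1 (X.dim u) \ P) u) (1:R) ⊗ₜ[R]
        (Finsupp.single (iterFace X false (Finset.Icc 1 (X.dim u - P.card) \ D)
            (iterFace X true P u)) (1:R) ⊗ₜ[R]
          Finsupp.single (iterFace X true D (iterFace X true P u)) (1:R)))
    = G R u P (D.image (sigmaEmb P)) := by
  set m := X.dim u with hm
  set I : Finset ℕ := Finset.Icc 1 m with hI
  set σ : ℕ → ℕ := sigmaEmb P with hσ
  set Q : Finset ℕ := D.image σ with hQdef
  have hinj : Function.Injective σ := (sigmaEmb_strictMono P).injective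
  have himg : (Finset.Icc 1 (m - P.card)).image σ = I \ P := sigmaEmb_image hP
  have hQ : Q ⊆ I \ P := by
    rw [hQdef, ← himg]
    exact Finset.image_subset_image hD
  have himgD : (Finset.Icc 1 (m - P.card) \ D).image σ = (I \ P) \ Q := by
    rw [Finset.image_sdiff _ _ hinj, himg, hQdef]
  have hR : (I \ P) \ Q = I \ (P ∪ Q) := by
    ext a
    simp only [Finset.mem_sdiff, Finset.mem_union]
    tauto
  -- cell 2
  have hc2 : iterFace X false (Finset.Icc 1 (m - P.card) \ D) (iterFace X true P u)
      = mFace X (fun j => decide (j ∈ P)) (P ∪ (I \ (P ∪ Q))) u := by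
    rw [iterFace_iterFace hface (fun j => decide (j ∈ P)) false true P _
      (fun b hb => decide_eq_true hb)
      (fun i hi => decide_eq_false (fun hp => ?_)), himgD, hR]
    · congr 1
      ext a
      simp only [Finset.mem_union, Finset.mem_sdiff]
      tauto
    · have : σ i ∈ I \ P := by
        rw [← himg]
        exact Finset.mem_image_of_mem σ (Finset.mem_sdiff.mp hi).1
      exact (Finset.mem_sdiff.mp this).2 hp
  -- cell 3
  have hc3 : iterFace X true D (iterFace X true P u) = iterFace X true (P ∪ Q) u := by
    rw [iterFace_iterFace hface (fun _ => true) true true P D (fun _ _ => rfl)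
      (fun _ _ => rfl), ← hQdef, ← iterFace_eq_mFace, Finset.union_comm]
  -- sign
  have hsgn : shuffleSign P (I \ P) * shuffleSign D (Finset.Icc 1 (m - P.card) \ D)
      = shuffleSign P Q * shuffleSign P (I \ (P ∪ Q)) * shuffleSign Q (I \ (P ∪ Q)) := by
    have h1 : shuffleSign D (Finset.Icc 1 (m - P.card) \ D) = shuffleSign Q (I \ (P ∪ Q)) := by
      rw [hQdef, ← hR, ← himgD, hσ, shuffleSign_image (sigmaEmb_strictMono P)]
    have h2 : shuffleSign P (I \ P) = shuffleSign P Q * shuffleSign P (I \ (P ∪ Q)) := by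
      have hsplit : I \ P = Q ∪ (I \ (P ∪ Q)) := by
        ext a
        simp only [Finset.mem_union, Finset.mem_sdiff]
        constructor
        · rintro ⟨h1, h2⟩
          by_cases hq : a ∈ Q
          · exact Or.inl hq
          · exact Or.inr ⟨h1, by tauto⟩
        · rintro (hq | ⟨h1, h2⟩)
          · have := hQ hq
            exact Finset.mem_sdiff.mp this
          · exact ⟨h1, fun hp => h2 (Or.inl hp)⟩
      rw [hsplit, shuffleSign_union_right _ ?_]
      rw [← hR]
      exact Finset.disjoint_sdiff
    rw [h1, h2]
  rw [G, hc2, hc3, hsgn]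



/-! ### reindexing of sums -/

lemma sum_image_powerset {M : Type*} [AddCommMonoid M] {f : ℕ → ℕ}
    (hf : Function.Injective f) {n : ℕ} {A : Finset ℕ}
    (himg : (Finset.Icc 1 n).image f = A) (g : Finset ℕ → M) :
    ∑ C ∈ (Finset.Icc 1 n).powerset, g (C.image f) = ∑ P ∈ A.powerset, g P := by
  apply Finset.sum_nbij' (i := fun C => C.image f)
    (j := fun P => (Finset.Icc 1 n).filter (fun i => f i ∈ P))
  · intro C hC
    exact Finset.mem_powerset.mpr (himg ▸ Finset.image_subset_image (Finset.mem_powerset.mp hC))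
  · intro P hP
    exact Finset.mem_powerset.mpr (Finset.filter_subset _ _)
  · intro C hC
    have hCsub := Finset.mem_powerset.mp hC
    ext i
    simp only [Finset.mem_filter, Finset.mem_image]
    constructor
    · rintro ⟨hi, a, ha, hfa⟩
      exact (hf hfa) ▸ ha
    · intro hi
      exact ⟨hCsub hi, i, hi, rfl⟩
  · intro P hP
    have hPsub := Finset.mem_powerset.mp hP
    ext x
    simp only [Finset.mem_image, Finset.mem_filter]
    constructor
    · rintro ⟨a, ⟨ha, hfa⟩, rfl⟩
      exact hfa
    · intro hx
      have hx' := hPsub hx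
      rw [← himg] at hx'
      rcases Finset.mem_image.mp hx' with ⟨a, ha, rfl⟩
      exact ⟨a, ⟨ha, hx⟩, rfl⟩
  · intro C hC
    rfl

lemma sum_partition {M : Type*} [AddCommMonoid M] (I : Finset ℕ)
    (g : Finset ℕ → Finset ℕ → M) :
    ∑ A ∈ I.powerset, ∑ P ∈ A.powerset, g P (A \ P)
      = ∑ P ∈ I.powerset, ∑ Q ∈ (I \ P).powerset, g P Q := by
  rw [Finset.sum_sigma', Finset.sum_sigma']
  apply Finset.sum_nbij' (i := fun x => (⟨x.2, x.1 \ x.2⟩ : Σ _ : Finset ℕ, Finset ℕ))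
    (j := fun x => (⟨x.1 ∪ x.2, x.1⟩ : Σ _ : Finset ℕ, Finset ℕ))
  · rintro ⟨A, P⟩ h
    rw [Finset.mem_sigma, Finset.mem_powerset, Finset.mem_powerset] at h
    rw [Finset.mem_sigma, Finset.mem_powerset, Finset.mem_powerset]
    exact ⟨h.2.trans h.1, Finset.sdiff_subset_sdiff h.1 Finset.Subset.rfl⟩
  · rintro ⟨P, Q⟩ h
    rw [Finset.mem_sigma, Finset.mem_powerset, Finset.mem_powerset] at h
    rw [Finset.mem_sigma, Finset.mem_powerset, Finset.mem_powerset]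
    exact ⟨Finset.union_subset h.1 (h.2.trans Finset.sdiff_subset), Finset.subset_union_left⟩
  · rintro ⟨A, P⟩ h
    rw [Finset.mem_sigma, Finset.mem_powerset, Finset.mem_powerset] at h
    exact Sigma.ext (Finset.union_sdiff_of_subset h.2) (heq_of_eq rfl)
  · rintro ⟨P, Q⟩ h
    rw [Finset.mem_sigma, Finset.mem_powerset, Finset.mem_powerset] at h
    have hdisj : Disjoint P Q := Finset.disjoint_of_subset_right h.2 Finset.disjoint_sdiff
    exact Sigma.ext rfl (heq_of_eq (Finset.union_sdiff_cancel_left hdisj))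
  · rintro ⟨A, P⟩ h
    rfl

end Stmt7

open Stmt7 in
theorem stmt7 (R : Type*) [CommRing R] (X : CubicalData)
    -- cubical identities
    (hface : ∀ (ε ω : Bool) (i j : ℕ) (c : X.Cell), i < j →
      X.face ε i (X.face ω j c) = X.face ω (j - 1) (X.face ε i c))
    (hdim : ∀ (ε : Bool) (i : ℕ) (c : X.Cell), 1 ≤ i → i ≤ X.dim c →
      X.dim (X.face ε i c) = X.dim c - 1) :
    (TensorProduct.assoc R (X.Cell →₀ R) (X.Cell →₀ R) (X.Cell →₀ R)).toLinearMap ∘ₗ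
        LinearMap.rTensor (X.Cell →₀ R) (serreDiagonal R X) ∘ₗ serreDiagonal R X
      = LinearMap.lTensor (X.Cell →₀ R) (serreDiagonal R X) ∘ₗ serreDiagonal R X := by
  refine Finsupp.lhom_ext fun u r => ?_
  have hr : (Finsupp.single u r : X.Cell →₀ R) = r • Finsupp.single u 1 := by
    rw [Finsupp.smul_single, smul_eq_mul, mul_one]
  simp only [LinearMap.comp_apply, hr, map_smul]
  congr 1
  rw [LHS_eval hdim R u, RHS_eval hdim R u]
  trans (∑ A ∈ (Finset.Icc 1 (X.dim u)).powerset, ∑ P ∈ A.powerset, G R u P (A \ P))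
  · refine Finset.sum_congr rfl fun A hA => ?_
    have hA' := Finset.mem_powerset.mp hA
    rw [Finset.sum_congr rfl (fun C hC => Lterm hface R u hA' (Finset.mem_powerset.mp hC))]
    have hcard : X.dim u - (Finset.Icc 1 (X.dim u) \ A).card = A.card := by
      have h1 := Finset.card_le_card hA'
      have h2 : (Finset.Icc 1 (X.dim u) \ A).card = (Finset.Icc 1 (X.dim u)).card - A.card :=
        Finset.card_sdiff_of_subset hA'
      rw [Nat.card_Icc] at *
      omega
    have himg : (Finset.Icc 1 A.card).image (sigmaEmb (Finset.Icc 1 (X.dim u) \ A)) = A := by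
      rw [← hcard, sigmaEmb_image Finset.sdiff_subset, Finset.sdiff_sdiff_eq_self hA']
    exact sum_image_powerset (sigmaEmb_strictMono _).injective himg
      (fun P => G R u P (A \ P))
  · rw [sum_partition]
    refine Finset.sum_congr rfl fun P hP => ?_
    have hP' := Finset.mem_powerset.mp hP
    symm
    rw [Finset.sum_congr rfl (fun D hD => Rterm hface R u hP' (Finset.mem_powerset.mp hD))]
    exact sum_image_powerset (sigmaEmb_strictMono _).injective (sigmaEmb_image hP')
      (fun Q => G R u P Q)
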